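/- Let κ be an infinite cardinal and let ⟨s_β : β < γ⟩ with γ ≤ κ be a capped sequence in 𝕊_κ: s_{β+1} is a capped extension of s_β for all β (s_β ⊊ s_{β+1}, s_{β+1} takes value 0 at its top and takes only positive values strictly between |s_β| and its top), and at limit ordinals λ < γ, s_λ = (⋃_{β<λ} s_β)⌢⟨0⟩. Then the sequence has a least upper bound in (𝕊_κ, ⊆), namely (⋃_{β<γ} s_β)⌢⟨0⟩. -/

import Mathlib

open Cardinal

universe u

/-- The order type of a set of ordinals (one universe up). -/
noncomputable def otp (s : Set Ordinal.{u}) : Ordinal.{u + 1} :=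
  @Ordinal.type s (Subrel ((· < ·) : Ordinal.{u} → Ordinal.{u} → Prop) (· ∈ s)) inferInstance

/-- `C` is unbounded in (cofinal below) `x`. -/
def UnbddBelow (C : Set Ordinal.{u}) (x : Ordinal.{u}) : Prop :=
  ∀ β < x, ∃ α ∈ C, β < α ∧ α < x

/-- The set `Cₙᵗ = {α < l : t α ≤ n}`. -/
def Ct (t : Ordinal.{u} → ℕ) (l : Ordinal.{u}) (n : ℕ) : Set Ordinal.{u} :=
  {α | α < l ∧ t α ≤ n}

/-- Membership in `𝕊_κ`: `t` has domain a successor ordinal `l < κ⁺`, each `Cₙᵗ` is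
closed, at limit ordinals `t` takes the least value `n` with `Cₙᵗ` unbounded below, and
every interval disjoint from `Cₙ₋₁ᵗ` meets `Cₙᵗ` in a set of order type `< κ·ω`. -/
def InSkappa (κ : Cardinal.{u}) (l : Ordinal.{u}) (t : Ordinal.{u} → ℕ) : Prop :=
  (∃ δ, l = δ + 1) ∧ l < (Order.succ κ).ord ∧
  (∀ n : ℕ, ∀ x < l, Order.IsSuccLimit x → UnbddBelow (Ct t l n) x → t x ≤ n) ∧
  (∀ x < l, Order.IsSuccLimit x →
    UnbddBelow (Ct t l (t x)) x ∧ ∀ m : ℕ, UnbddBelow (Ct t l m) x → t x ≤ m) ∧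
  (∀ n : ℕ, ∀ I : Set Ordinal.{u}, I ⊆ Set.Iio l → I.OrdConnected →
    (∀ x ∈ I, n ≤ t x) →
    otp (Ct t l n ∩ I) < Ordinal.lift.{u + 1} (κ.ord * Ordinal.omega0))

lemma otp_mono {s t : Set Ordinal.{u}} (h : s ⊆ t) : otp s ≤ otp t :=
  RelEmbedding.ordinal_type_le
    ⟨⟨fun x => ⟨x.1, h x.2⟩, fun x y hxy => Subtype.ext (Subtype.mk_eq_mk.1 hxy)⟩, Iff.rfl⟩

lemma otp_empty : otp (∅ : Set Ordinal.{u}) = 0 :=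
  Ordinal.type_eq_zero_of_empty _

lemma otp_union_le {s t : Set Ordinal.{u}} (h : ∀ a ∈ s, ∀ b ∈ t, a < b) :
    otp (s ∪ t) ≤ otp s + otp t := by
  classical
  unfold otp
  rw [← Ordinal.type_sum_lex]
  refine RelEmbedding.ordinal_type_le
    (RelEmbedding.ofMonotone (fun x => if hx : x.1 ∈ s then Sum.inl ⟨x.1, hx⟩
      else Sum.inr ⟨x.1, x.2.resolve_left hx⟩) ?_)
  intro a b hab
  by_cases ha : a.1 ∈ s <;> by_cases hb : b.1 ∈ s <;> simp only [ha, hb, dif_pos, dif_neg,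
    not_false_iff]
  · exact Sum.Lex.inl hab
  · exact Sum.Lex.sep _ _
  · exact absurd (h b.1 hb a.1 (a.2.resolve_left ha)) (lt_asymm hab)
  · exact Sum.Lex.inr hab

lemma otp_le_lift {s : Set Ordinal.{u}} {a : Ordinal.{u}} (φ : Ordinal.{u} → Ordinal.{u})
    (h1 : ∀ x ∈ s, φ x < a) (h2 : StrictMonoOn φ s) : otp s ≤ Ordinal.lift.{u + 1} a := by
  rw [← Ordinal.typein_ordinal, ← Ordinal.type_subrel]
  exact RelEmbedding.ordinal_type_le
    ⟨⟨fun x => ⟨φ x.1, h1 _ x.2⟩, fun x y hxy =>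
        Subtype.ext (h2.injOn x.2 y.2 (Subtype.mk_eq_mk.1 hxy))⟩,
      fun {x y} => h2.lt_iff_lt x.2 y.2⟩

lemma add_lt_mul_omega0 {c a b : Ordinal.{u}} (hc : 0 < c) (ha : a < c * Ordinal.omega0)
    (hb : b < c * Ordinal.omega0) : a + b < c * Ordinal.omega0 := by
  obtain ⟨x, hx, hax⟩ := (Ordinal.lt_mul_iff_of_isSuccLimit Ordinal.isSuccLimit_omega0).1 ha
  obtain ⟨y, hy, hby⟩ := (Ordinal.lt_mul_iff_of_isSuccLimit Ordinal.isSuccLimit_omega0).1 hb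
  have hxy : x + y < Ordinal.omega0 := by
    obtain ⟨m, rfl⟩ := Ordinal.lt_omega0.1 hx
    obtain ⟨n, rfl⟩ := Ordinal.lt_omega0.1 hy
    rw [← Nat.cast_add]
    exact Ordinal.nat_lt_omega0 _
  calc a + b < a + c * y := by exact_mod_cast add_lt_add_right hby a
    _ ≤ c * x + c * y := add_le_add_left hax.le _
    _ = c * (x + y) := (mul_add c x y).symm
    _ < c * Ordinal.omega0 := mul_lt_mul_of_pos_left hxy hc
/-- A capped sequence in `𝕊_κ` of (limit) length at most `κ` has a least upper bound in
`(𝕊_κ, ⊆)`, namely `(⋃_{β<γ} s_β)⌢⟨0⟩`. -/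
theorem stmt14 (κ : Cardinal.{u}) (hκ : ℵ₀ ≤ κ) (γ : Ordinal.{u}) (hγ : γ ≤ κ.ord)
    (hγlim : Order.IsSuccLimit γ) (l : Ordinal.{u} → Ordinal.{u}) (s : Ordinal.{u} → Ordinal.{u} → ℕ)
    (hmem : ∀ β < γ, InSkappa κ (l β) (s β))
    (hcapped : ∀ β, β + 1 < γ →
      l β < l (β + 1) ∧ (∀ ξ < l β, s (β + 1) ξ = s β ξ) ∧
      s (β + 1) (Ordinal.pred (l (β + 1))) = 0 ∧
      ∀ ξ, l β ≤ ξ → ξ < Ordinal.pred (l (β + 1)) → 0 < s (β + 1) ξ)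
    (hlimit : ∀ lam < γ, Order.IsSuccLimit lam →
      l lam = sSup (l '' Set.Iio lam) + 1 ∧
      (∀ β < lam, ∀ ξ < l β, s lam ξ = s β ξ) ∧
      s lam (sSup (l '' Set.Iio lam)) = 0)
    (u : Ordinal.{u} → ℕ)
    (hu : ∀ β < γ, ∀ ξ < l β, u ξ = s β ξ)
    (hu0 : u (sSup (l '' Set.Iio γ)) = 0) :
    InSkappa κ (sSup (l '' Set.Iio γ) + 1) u ∧
    (∀ β < γ, l β ≤ sSup (l '' Set.Iio γ) + 1 ∧ ∀ ξ < l β, u ξ = s β ξ) ∧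
    ∀ (lv : Ordinal.{u}) (v : Ordinal.{u} → ℕ), InSkappa κ lv v →
      (∀ β < γ, l β ≤ lv ∧ ∀ ξ < l β, v ξ = s β ξ) →
      sSup (l '' Set.Iio γ) + 1 ≤ lv ∧ ∀ ξ < sSup (l '' Set.Iio γ) + 1, v ξ = u ξ := by
  classical
  set L := sSup (l '' Set.Iio γ) with hLdef
  have hγ0 : (0 : Ordinal) < γ := hγlim.pos
  have hsucclt : ∀ β, β < γ → β + 1 < γ := fun β h => by
    rw [Ordinal.add_one_eq_succ]; exact hγlim.succ_lt h
  have hbdd : BddAbove (l '' Set.Iio γ) := Ordinal.bddAbove_of_small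
  have hne : (l '' Set.Iio γ).Nonempty := ⟨l 0, 0, hγ0, rfl⟩
  have hlL : ∀ β, β < γ → l β ≤ L := fun β h => le_csSup hbdd ⟨β, h, rfl⟩
  have hlltL : ∀ β, β < γ → l β < L := fun β h =>
    lt_of_lt_of_le (hcapped β (hsucclt β h)).1 (hlL _ (hsucclt β h))
  have hexl : ∀ a, a < L → ∃ β, β < γ ∧ a < l β := by
    intro a ha
    obtain ⟨b, hb, hab⟩ := exists_lt_of_lt_csSup hne ha
    obtain ⟨β, hβ, rfl⟩ := hb
    exact ⟨β, hβ, hab⟩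
  have hLlim : Order.IsSuccLimit L := by
    refine Ordinal.isSuccLimit_iff.2 ⟨fun h0 => ?_, Order.isSuccPrelimit_of_succ_lt (fun a ha => ?_)⟩
    · have := hlltL 0 hγ0
      rw [h0] at this
      exact not_lt_zero this
    · obtain ⟨β, hβ, hab⟩ := hexl a ha
      exact lt_of_le_of_lt (Order.succ_le_of_lt hab) (hlltL β hβ)
  have hLsucc : L < L + 1 := by rw [Ordinal.add_one_eq_succ]; exact Order.lt_succ L
  have hltL1 : ∀ x : Ordinal, x < L + 1 ↔ x ≤ L := fun x => by
    rw [Ordinal.add_one_eq_succ, Order.lt_succ_iff]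
  have htop : ∀ β, β + 1 < γ → l β ≤ Ordinal.pred (l (β + 1)) ∧
      Ordinal.pred (l (β + 1)) < l (β + 1) ∧ u (Ordinal.pred (l (β + 1))) = 0 := by
    intro β hβ
    obtain ⟨δ, hδ⟩ := (hmem (β + 1) hβ).1
    have hp : Ordinal.pred (l (β + 1)) = δ := by
      rw [hδ, Ordinal.add_one_eq_succ, Ordinal.pred_succ]
    have h2 : Ordinal.pred (l (β + 1)) < l (β + 1) := by
      rw [hp, hδ, Ordinal.add_one_eq_succ]; exact Order.lt_succ δ
    have h1 : l β ≤ Ordinal.pred (l (β + 1)) := by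
      rw [hp]
      have := (hcapped β hβ).1
      rwa [hδ, Ordinal.add_one_eq_succ, Order.lt_succ_iff] at this
    exact ⟨h1, h2, by rw [hu (β + 1) hβ _ h2]; exact (hcapped β hβ).2.2.1⟩
  have hC0 : UnbddBelow (Ct u (L + 1) 0) L := by
    intro b hb
    obtain ⟨β, hβ, hbl⟩ := hexl b hb
    obtain ⟨h1, h2, h3⟩ := htop β (hsucclt β hβ)
    have hpL : Ordinal.pred (l (β + 1)) < L := lt_of_lt_of_le h2 (hlL _ (hsucclt β hβ))
    exact ⟨_, ⟨lt_trans hpL hLsucc, le_of_eq h3⟩, lt_of_lt_of_le hbl h1, hpL⟩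
  have htrans : ∀ β, β < γ → ∀ x, x ≤ l β → ∀ m : ℕ,
      (UnbddBelow (Ct u (L + 1) m) x ↔ UnbddBelow (Ct (s β) (l β) m) x) := by
    intro β hβ x hx m
    constructor
    · intro h b hb
      obtain ⟨α, ⟨h1, h2⟩, hbα, hαx⟩ := h b hb
      have hαl : α < l β := lt_of_lt_of_le hαx hx
      exact ⟨α, ⟨hαl, by rw [← hu β hβ α hαl]; exact h2⟩, hbα, hαx⟩
    · intro h b hb
      obtain ⟨α, ⟨h1, h2⟩, hbα, hαx⟩ := h b hb
      exact ⟨α, ⟨lt_trans (lt_of_lt_of_le h1 (hlL β hβ)) hLsucc,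
        by rw [hu β hβ α h1]; exact h2⟩, hbα, hαx⟩
  have hR : ∀ (n : ℕ) (I : Set Ordinal.{u}) (β : Ordinal), β < γ → I ⊆ Set.Iio (l β) →
      I.OrdConnected → (∀ x ∈ I, n ≤ u x) →
      otp (Ct u (L + 1) n ∩ I) < Ordinal.lift.{u + 1} (κ.ord * Ordinal.omega0) := by
    intro n I β hβ hsub hconn hval
    have heq : Ct u (L + 1) n ∩ I = Ct (s β) (l β) n ∩ I := by
      ext α
      constructor
      · rintro ⟨⟨h1, h2⟩, hI⟩
        exact ⟨⟨hsub hI, by rw [← hu β hβ α (hsub hI)]; exact h2⟩, hI⟩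
      · rintro ⟨⟨h1, h2⟩, hI⟩
        exact ⟨⟨lt_trans (lt_of_lt_of_le h1 (hlL β hβ)) hLsucc,
          by rw [hu β hβ α h1]; exact h2⟩, hI⟩
    rw [heq]
    exact (hmem β hβ).2.2.2.2 n I hsub hconn
      (fun x hx => by rw [← hu β hβ x (hsub hx)]; exact hval x hx)
  -- the φ machinery
  set φ : Ordinal.{u} → Ordinal.{u} :=
    fun z => sInf {β | z < if β < γ then l β else L + 1} with hφdef
  have hsetγ : ∀ z, z ≤ L → γ ∈ {β | z < if β < γ then l β else L + 1} := by
    intro z hz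
    simp only [Set.mem_setOf_eq, if_neg (lt_irrefl γ)]
    exact lt_of_le_of_lt hz hLsucc
  have hφmem : ∀ z, z ≤ L → z < (if φ z < γ then l (φ z) else L + 1) := fun z hz =>
    csInf_mem ⟨γ, hsetγ z hz⟩
  have hφle : ∀ z, z ≤ L → φ z ≤ γ := fun z hz =>
    csInf_le (OrderBot.bddBelow _) (hsetγ z hz)
  have hφmin : ∀ z, ∀ β' < φ z, (if β' < γ then l β' else L + 1) ≤ z := fun z β' hβ' =>
    le_of_not_gt (fun hc => notMem_of_lt_csInf hβ' (OrderBot.bddBelow _) hc)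
  have hφmono : ∀ z1 z2, z2 ≤ L → z1 ≤ z2 → φ z1 ≤ φ z2 := fun z1 z2 hz2 h12 =>
    csInf_le (OrderBot.bddBelow _) (lt_of_le_of_lt h12 (hφmem z2 hz2))
  have hdet : ∀ z, l 0 ≤ z → z ≤ L → u z = 0 →
      (φ z = γ ∧ z = L) ∨ (φ z < γ ∧ z = Ordinal.pred (l (φ z))) := by
    intro z h0 hzL hz0
    have hβ0 : 0 < φ z := by
      rcases eq_zero_or_pos (φ z) with hc | hc
      · have h1 := hφmem z hzL
        rw [hc, if_pos hγ0] at h1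
        exact absurd h1 (not_lt_of_ge h0)
      · exact hc
    have hfa : ∀ β' < φ z, l β' ≤ z := by
      intro β' hβ'
      have hβ'γ : β' < γ := lt_of_lt_of_le hβ' (hφle z hzL)
      have := hφmin z β' hβ'
      rwa [if_pos hβ'γ] at this
    rcases eq_or_lt_of_le (hφle z hzL) with heq | hlt
    · left
      refine ⟨heq, le_antisymm hzL (csSup_le hne ?_)⟩
      rintro b ⟨β', hβ', rfl⟩
      exact hfa β' (heq ▸ hβ')
    · right
      refine ⟨hlt, ?_⟩
      have hzlβ : z < l (φ z) := by
        have := hφmem z hzL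
        rwa [if_pos hlt] at this
      rcases Ordinal.zero_or_succ_or_isSuccLimit (φ z) with h0' | ⟨δ, hδ⟩ | hlim
      · exact absurd h0' (ne_of_gt hβ0)
      · rw [← Ordinal.add_one_eq_succ, eq_comm] at hδ
        have hδγ : δ + 1 < γ := hδ ▸ hlt
        have hδφ : δ < φ z := by
          rw [hδ, Ordinal.add_one_eq_succ]; exact Order.lt_succ δ
        have hlδ : l δ ≤ z := hfa δ hδφ
        have huz : u z = s (δ + 1) z := hu (δ + 1) hδγ z (by rw [← hδ]; exact hzlβ)
        have hnp : ¬ z < Ordinal.pred (l (δ + 1)) := by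
          intro hc
          have := (hcapped δ hδγ).2.2.2 z hlδ hc
          rw [← huz, hz0] at this
          exact lt_irrefl 0 this
        have hup : z ≤ Ordinal.pred (l (δ + 1)) := by
          obtain ⟨δ', hδ'⟩ := (hmem (δ + 1) hδγ).1
          have hp : Ordinal.pred (l (δ + 1)) = δ' := by
            rw [hδ', Ordinal.add_one_eq_succ, Ordinal.pred_succ]
          rw [hp]
          have hzδ' : z < δ' + 1 := by rw [← hδ', ← hδ]; exact hzlβ
          rwa [Ordinal.add_one_eq_succ, Order.lt_succ_iff] at hzδ'
        rw [hδ]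
        exact le_antisymm hup (le_of_not_gt hnp)
      · obtain ⟨hlβeq, -, -⟩ := hlimit (φ z) hlt hlim
        have hM : sSup (l '' Set.Iio (φ z)) ≤ z := by
          refine csSup_le ⟨l 0, 0, hβ0, rfl⟩ ?_
          rintro b ⟨β', hβ', rfl⟩
          exact hfa β' hβ'
        have hzM : z ≤ sSup (l '' Set.Iio (φ z)) := by
          have := hzlβ
          rwa [hlβeq, Ordinal.add_one_eq_succ, Order.lt_succ_iff] at this
        have hpred : Ordinal.pred (l (φ z)) = sSup (l '' Set.Iio (φ z)) := by
          rw [hlβeq, Ordinal.add_one_eq_succ, Ordinal.pred_succ]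
        rw [hpred]
        exact le_antisymm hzM hM
  have hZ : otp {ξ : Ordinal.{u} | l 0 ≤ ξ ∧ ξ ≤ L ∧ u ξ = 0} ≤
      Ordinal.lift.{u + 1} (γ + 1) := by
    refine otp_le_lift φ ?_ ?_
    · intro x hx
      rw [Ordinal.add_one_eq_succ, Order.lt_succ_iff]
      exact hφle x hx.2.1
    · intro z1 h1 z2 h2 h12
      refine lt_of_le_of_ne (hφmono z1 z2 h2.2.1 h12.le) (fun heq => absurd ?_ (ne_of_lt h12))
      rcases hdet z1 h1.1 h1.2.1 h1.2.2 with ⟨e1, w1⟩ | ⟨e1, w1⟩ <;>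
        rcases hdet z2 h2.1 h2.2.1 h2.2.2 with ⟨e2, w2⟩ | ⟨e2, w2⟩
      · rw [w1, w2]
      · exact absurd (heq ▸ e1) (ne_of_lt e2)
      · exact absurd e2 (ne_of_lt (heq ▸ e1))
      · rw [w1, w2, heq]
  -- cardinality bound
  have hLord : L < (Order.succ κ).ord := by
    have hiso : l '' Set.Iio γ =
        Set.range (fun x : γ.ToType => l (((Ordinal.ToType.mk (o := γ))).symm x)) := by
      ext x
      constructor
      · rintro ⟨b, hb, rfl⟩
        exact ⟨(Ordinal.ToType.mk (o := γ)) ⟨b, hb⟩, by simp⟩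
      · rintro ⟨t, rfl⟩
        exact ⟨(((Ordinal.ToType.mk (o := γ))).symm t).1, (((Ordinal.ToType.mk (o := γ))).symm t).2, rfl⟩
    rw [hLdef, hiso]
    refine Ordinal.iSup_lt_ord ?_ ?_
    · rw [Cardinal.mk_toType, (Cardinal.isRegular_succ hκ).cof_eq]
      exact lt_of_le_of_lt
        (le_trans (Ordinal.card_le_card hγ) (le_of_eq (Cardinal.card_ord κ)))
        (Order.lt_succ κ)
    · exact fun i => (hmem _ (((Ordinal.ToType.mk (o := γ))).symm i).2).2.1
  have hord : Order.IsSuccLimit (Order.succ κ).ord := Cardinal.isSuccLimit_ord (le_trans hκ (Order.le_succ κ))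
  have hL1ord : L + 1 < (Order.succ κ).ord := by
    rw [Ordinal.add_one_eq_succ]; exact hord.succ_lt hLord
  -- clauses 3 and 4
  have hclause3 : ∀ n : ℕ, ∀ x < L + 1, Order.IsSuccLimit x → UnbddBelow (Ct u (L + 1) n) x → u x ≤ n := by
    intro n x hx hxlim hunb
    rcases eq_or_lt_of_le ((hltL1 x).1 hx) with heq | hlt
    · rw [heq, hu0]
      exact Nat.zero_le n
    · obtain ⟨β, hβ, hxl⟩ := hexl x hlt
      rw [hu β hβ x hxl]
      exact (hmem β hβ).2.2.1 n x hxl hxlim ((htrans β hβ x hxl.le n).1 hunb)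
  have hclause4 : ∀ x < L + 1, Order.IsSuccLimit x →
      UnbddBelow (Ct u (L + 1) (u x)) x ∧ ∀ m : ℕ, UnbddBelow (Ct u (L + 1) m) x → u x ≤ m := by
    intro x hx hxlim
    rcases eq_or_lt_of_le ((hltL1 x).1 hx) with heq | hlt
    · constructor
      · rw [heq, hu0]
        exact hC0
      · intro m _
        rw [heq, hu0]
        exact Nat.zero_le m
    · obtain ⟨β, hβ, hxl⟩ := hexl x hlt
      have h4 := (hmem β hβ).2.2.2.1 x hxl hxlim
      constructor
      · rw [hu β hβ x hxl]
        exact (htrans β hβ x hxl.le _).2 h4.1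
      · intro m hm
        rw [hu β hβ x hxl]
        exact h4.2 m ((htrans β hβ x hxl.le m).1 hm)
  -- arithmetic facts
  have hω : Ordinal.omega0 ≤ κ.ord := Cardinal.omega0_le_ord.2 hκ
  have hγ1 : γ + 1 < κ.ord * Ordinal.omega0 := by
    have h2ω : (2 : Ordinal) ≤ Ordinal.omega0 := le_of_lt (by exact_mod_cast Ordinal.nat_lt_omega0 2)
    calc γ + 1 ≤ κ.ord + 1 := add_le_add_left hγ 1
      _ < κ.ord + κ.ord := add_lt_add_right (lt_of_lt_of_le Ordinal.one_lt_omega0 hω) κ.ord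
      _ = κ.ord * 2 := by rw [← one_add_one_eq_two, mul_add, mul_one]
      _ ≤ κ.ord * Ordinal.omega0 := mul_le_mul_right h2ω κ.ord
  have hκordpos : (0 : Ordinal) < κ.ord := lt_of_lt_of_le Ordinal.omega0_pos hω
  have hκpos : (0 : Ordinal.{u + 1}) < Ordinal.lift.{u + 1} κ.ord := by
    have h0 : Ordinal.lift.{u + 1} (0 : Ordinal.{u}) < Ordinal.lift.{u + 1} κ.ord :=
      Ordinal.lift_lt.2 hκordpos
    simpa using h0
  have hlifteq : Ordinal.lift.{u + 1} (κ.ord * Ordinal.omega0) =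
      Ordinal.lift.{u + 1} κ.ord * Ordinal.omega0 := by
    rw [Ordinal.lift_mul, Ordinal.lift_omega0]
  have hRHSpos : (0 : Ordinal.{u + 1}) < Ordinal.lift.{u + 1} (κ.ord * Ordinal.omega0) := by
    have h0 : Ordinal.lift.{u + 1} (0 : Ordinal.{u}) <
        Ordinal.lift.{u + 1} (κ.ord * Ordinal.omega0) :=
      Ordinal.lift_lt.2 (mul_pos hκordpos Ordinal.omega0_pos)
    simpa using h0
  -- clause 5
  have hclause5 : ∀ n : ℕ, ∀ I : Set Ordinal.{u}, I ⊆ Set.Iio (L + 1) → I.OrdConnected →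
      (∀ x ∈ I, n ≤ u x) →
      otp (Ct u (L + 1) n ∩ I) < Ordinal.lift.{u + 1} (κ.ord * Ordinal.omega0) := by
    intro n I hsub hconn hval
    match n with
    | 0 =>
      have hsplit : Ct u (L + 1) 0 ∩ I =
          (Ct u (L + 1) 0 ∩ (I ∩ Set.Iio (l 0))) ∪ (Ct u (L + 1) 0 ∩ I ∩ Set.Ici (l 0)) := by
        ext x
        constructor
        · rintro ⟨hc, hI⟩
          rcases lt_or_ge x (l 0) with h | h
          · exact Or.inl ⟨hc, hI, h⟩
          · exact Or.inr ⟨⟨hc, hI⟩, h⟩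
        · rintro (⟨hc, hI, -⟩ | ⟨⟨hc, hI⟩, -⟩) <;> exact ⟨hc, hI⟩
      rw [hsplit]
      refine lt_of_le_of_lt (otp_union_le ?_) ?_
      · rintro a ⟨-, -, ha⟩ b ⟨-, hb⟩
        exact lt_of_lt_of_le ha hb
      · rw [hlifteq]
        refine add_lt_mul_omega0 hκpos ?_ ?_ <;> rw [← hlifteq]
        · exact hR 0 (I ∩ Set.Iio (l 0)) 0 hγ0 Set.inter_subset_right
            (hconn.inter Set.ordConnected_Iio) (fun x _ => Nat.zero_le _)
        · refine lt_of_le_of_lt (le_trans (otp_mono ?_) hZ) (Ordinal.lift_lt.2 hγ1)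
          rintro x ⟨⟨⟨hx1, hx2⟩, -⟩, hx3⟩
          exact ⟨hx3, (hltL1 x).1 hx1, Nat.le_zero.1 hx2⟩
    | (m + 1) =>
      rcases Set.eq_empty_or_nonempty I with rfl | ⟨a, ha⟩
      · rw [Set.inter_empty, otp_empty]
        exact hRHSpos
      · have haL : a < L := by
          rcases eq_or_lt_of_le ((hltL1 a).1 (hsub ha)) with heq | h
          · exfalso
            have := hval a ha
            rw [heq, hu0] at this
            exact Nat.not_succ_le_zero m this
          · exact h
        obtain ⟨β, hβ, hal⟩ := hexl a haL
        have hβ1 : β + 1 < γ := hsucclt β hβ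
        have hIsub : I ⊆ Set.Iio (l (β + 1)) := by
          intro c hc
          by_contra hcc
          rw [Set.mem_Iio, not_lt] at hcc
          obtain ⟨h1, h2, h3⟩ := htop β hβ1
          have hpI : Ordinal.pred (l (β + 1)) ∈ I :=
            hconn.out ha hc ⟨le_of_lt (lt_of_lt_of_le hal h1), le_trans h2.le hcc⟩
          have := hval _ hpI
          rw [h3] at this
          exact Nat.not_succ_le_zero m this
        exact hR (m + 1) I (β + 1) hβ1 hIsub hconn hval
  refine ⟨⟨⟨L, rfl⟩, hL1ord, hclause3, hclause4, hclause5⟩,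
    fun β hβ => ⟨le_trans (hlL β hβ) hLsucc.le, hu β hβ⟩, ?_⟩
  -- least upper bound
  intro lv v hv hub
  have hLlv : L ≤ lv := csSup_le hne (by rintro b ⟨β, hβ, rfl⟩; exact (hub β hβ).1)
  have hLltlv : L < lv := by
    rcases eq_or_lt_of_le hLlv with heq | h
    · exfalso
      obtain ⟨δ, hδ⟩ := hv.1
      have hδL : δ < L := by
        rw [heq, hδ, Ordinal.add_one_eq_succ]; exact Order.lt_succ δ
      have h2 := hLlim.succ_lt hδL
      rw [heq, hδ, Ordinal.add_one_eq_succ] at h2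
      exact lt_irrefl _ h2
    · exact h
  refine ⟨by rw [Ordinal.add_one_eq_succ]; exact Order.succ_le_of_lt hLltlv, ?_⟩
  intro ξ hξ
  rcases eq_or_lt_of_le ((hltL1 ξ).1 hξ) with heq | hlt
  · rw [heq, hu0]
    have h4 := hv.2.2.2.1 L hLltlv hLlim
    have hunb : UnbddBelow (Ct v lv 0) L := by
      intro b hb
      obtain ⟨β, hβ, hbl⟩ := hexl b hb
      obtain ⟨h1, h2, -⟩ := htop β (hsucclt β hβ)
      have hp0 : v (Ordinal.pred (l (β + 1))) = 0 := by
        rw [(hub (β + 1) (hsucclt β hβ)).2 _ h2]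
        exact (hcapped β (hsucclt β hβ)).2.2.1
      have hpL : Ordinal.pred (l (β + 1)) < L := lt_of_lt_of_le h2 (hlL _ (hsucclt β hβ))
      exact ⟨_, ⟨lt_trans hpL hLltlv, le_of_eq hp0⟩, lt_of_lt_of_le hbl h1, hpL⟩
    exact Nat.le_zero.1 (h4.2 0 hunb)
  · obtain ⟨β, hβ, hξl⟩ := hexl ξ hlt
    rw [(hub β hβ).2 ξ hξl, hu β hβ ξ hξl]
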